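/- Let (E, ≼) be a partially ordered set of 'events' partitioned into sets K₀, K₁, K₂, … (indexed by views) with distinguished finite subsets Gᵢ ⊆ Kᵢ, such that: (a) if e ≼ f with e ∈ Kᵢ and f ∈ Kⱼ then i ≤ j; (b) elements of Gᵢ and Gⱼ with a strict relation g ≺ g' and g ∈ Gᵢ, g' ∈ Gⱼ satisfy i < j; and (c) the order is very well founded (each element has finitely many predecessors). Then there exists a timestamp function t : E → ℝ satisfying: (1) e ≺ f implies t(e) < t(f); (2) t(g) = i for every g ∈ Gᵢ; (3) for every real r, the set {e ∈ E | t(e) < r} is finite. -/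
import Mathlib


/-- Existence of a timeline: for a countable set of events, preordered (so that
contemporaneous events are allowed), partitioned into view classes `K i` with
distinguished finite subsets `G i ⊆ K i` such that (a) the order respects views,
(b) strict relations between distinguished events have strictly increasing views,
(c) the order is very well founded, and contemporaneous pairs lie within a single `G i`,
there is a timestamp function `t : E → ℝ` respecting the strict order, giving every
event of `G i` the timestamp `i`, and such that only finitely many events occur
before any given real time. -/
theorem timeline_exists {E : Type*} [Countable E] [Preorder E]
    (K G : ℕ → Set E)
    (hpart : ∀ e : E, ∃! i : ℕ, e ∈ K i)
    (hGK : ∀ i, G i ⊆ K i) (hGfin : ∀ i, (G i).Finite)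
    (ha : ∀ {e f : E} {i j : ℕ}, e ≤ f → e ∈ K i → f ∈ K j → i ≤ j)
    (hb : ∀ {g g' : E} {i j : ℕ}, g < g' → g ∈ G i → g' ∈ G j → i < j)
    (hc : ∀ e : E, {f : E | f < e}.Finite)
    (hcontemp : ∀ e f : E, e ≤ f → f ≤ e → e ≠ f → ∃ i, e ∈ G i ∧ f ∈ G i) :
    ∃ t : E → ℝ,
      (∀ e f : E, e < f → t e < t f) ∧
      (∀ e f : E, e ≤ f → f ≤ e → t e = t f) ∧
      (∀ i : ℕ, ∀ g ∈ G i, t g = (i : ℝ)) ∧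
      (∀ r : ℝ, {e : E | t e < r}.Finite) := by
  classical
  obtain ⟨enc, henc⟩ := Countable.exists_injective_nat E
  -- the view of an event
  obtain ⟨v, hvK, hvU⟩ : ∃ v : E → ℕ, (∀ e, e ∈ K (v e)) ∧ (∀ e i, e ∈ K i → v e = i) :=
    ⟨fun e => (hpart e).choose, fun e => (hpart e).choose_spec.1,
      fun e i h => ((hpart e).choose_spec.2 i h).symm⟩
  have hvmono : ∀ {e f : E}, e ≤ f → v e ≤ v f := fun h => ha h (hvK _) (hvK _)
  have hGv : ∀ {g : E} {i : ℕ}, g ∈ G i → v g = i := fun hg => hvU _ _ (hGK _ hg)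
  -- the rank of an event (number of strict predecessors)
  obtain ⟨ρ, hρ⟩ : ∃ ρ : E → ℕ, ∀ e f : E, e < f → ρ e < ρ f := by
    refine ⟨fun e => (hc e).toFinset.card, fun e f hef => Finset.card_lt_card ?_⟩
    have hsub : (hc e).toFinset ⊆ (hc f).toFinset := by
      intro x hx
      simp only [Set.Finite.mem_toFinset, Set.mem_setOf_eq] at *
      exact lt_trans hx hef
    rw [Finset.ssubset_iff_of_subset hsub]
    exact ⟨e, by simp [Set.Finite.mem_toFinset, hef], by
      simp [Set.Finite.mem_toFinset]⟩
  -- an enumeration bound, monotone along the order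
  obtain ⟨M, hMmono, hMself⟩ : ∃ M : E → ℕ,
      (∀ e f : E, e < f → M e ≤ M f) ∧ (∀ e, enc e ≤ M e) := by
    refine ⟨fun e => (insert e (hc e).toFinset).sup enc, fun e f hef => ?_, fun e => ?_⟩
    · apply Finset.sup_mono
      intro x hx
      simp only [Finset.mem_insert, Set.Finite.mem_toFinset, Set.mem_setOf_eq] at *
      rcases hx with rfl | hx
      · exact Or.inr hef
      · exact Or.inr (lt_trans hx hef)
    · exact Finset.le_sup (Finset.mem_insert_self e _)
  -- the base timestamp
  obtain ⟨B, hBmono, hBenc, hBlt⟩ : ∃ B : E → ℕ,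
      (∀ e f : E, e < f → B e < B f) ∧ (∀ e, enc e ≤ B e) ∧
      (∀ e f : E, f < e → v e < B e) := by
    refine ⟨fun e => v e + ρ e + M e, fun e f hef => ?_, fun e => ?_, fun e f hfe => ?_⟩
    · have h1 := hρ e f hef
      have h2 := hMmono e f hef
      have h3 := hvmono hef.le
      show v e + ρ e + M e < v f + ρ f + M f
      omega
    · have := hMself e
      show enc e ≤ v e + ρ e + M e
      omega
    · have := hρ f e hfe
      show v e < v e + ρ e + M e
      omega
  -- the set of indices of distinguished events above `e`
  set P : E → Set ℕ := fun e => {j | ∃ g ∈ G j, e < g} with hPdef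
  have hPmem : ∀ e j, j ∈ P e ↔ ∃ g ∈ G j, e < g := fun e j => Iff.rfl
  have hPanti : ∀ {e f : E}, e ≤ f → P f ⊆ P e := by
    intro e f hef j hj
    obtain ⟨g, hg, hfg⟩ := hj
    exact ⟨g, hg, lt_of_le_of_lt hef hfg⟩
  -- arithmetic helpers
  have hhalf : ∀ e : E, 0 < 1 / ((ρ e : ℝ) + 2) ∧ 1 / ((ρ e : ℝ) + 2) ≤ 1 / 2 := by
    intro e
    constructor
    · positivity
    · apply div_le_div_of_nonneg_left (by norm_num) (by norm_num)
      have : (0:ℝ) ≤ (ρ e : ℝ) := Nat.cast_nonneg _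
      linarith
  -- the timestamp function
  refine ⟨fun e => if e ∈ G (v e) then (v e : ℝ)
      else if (P e).Nonempty then
        min (B e) (((sInf (P e) : ℕ) : ℝ) - 1 / ((ρ e : ℝ) + 2))
      else (B e : ℝ), ?_, ?_, ?_, ?_⟩
  · -- strict monotonicity
    -- first two general bounds
    have L1 : ∀ e : E, e ∉ G (v e) → ∀ (i : ℕ) (g : E), g ∈ G i → g < e →
        (i : ℝ) < if e ∈ G (v e) then (v e : ℝ)
          else if (P e).Nonempty then
            min (B e) (((sInf (P e) : ℕ) : ℝ) - 1 / ((ρ e : ℝ) + 2))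
          else (B e : ℝ) := by
      intro e he i g hg hge
      rw [if_neg he]
      have hiv : i ≤ v e := by
        have := hvmono hge.le
        rw [hGv hg] at this
        exact this
      have hBe : (i : ℝ) < B e := by
        have := hBlt e g hge
        exact_mod_cast lt_of_le_of_lt hiv this
      by_cases hPe : (P e).Nonempty
      · rw [if_pos hPe]
        refine lt_min hBe ?_
        have hmem := Nat.sInf_mem hPe
        obtain ⟨g', hg', heg'⟩ := hmem
        have : i < sInf (P e) := hb (lt_trans hge heg') hg hg'
        have h1 : (i : ℝ) + 1 ≤ ((sInf (P e) : ℕ) : ℝ) := by exact_mod_cast this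
        have h2 := (hhalf e).2
        linarith
      · rw [if_neg hPe]; exact hBe
    have L2 : ∀ e : E, e ∉ G (v e) → ∀ (j : ℕ) (g : E), g ∈ G j → e < g →
        (if e ∈ G (v e) then (v e : ℝ)
          else if (P e).Nonempty then
            min (B e) (((sInf (P e) : ℕ) : ℝ) - 1 / ((ρ e : ℝ) + 2))
          else (B e : ℝ)) < (j : ℝ) := by
      intro e he j g hg heg
      have hPe : (P e).Nonempty := ⟨j, g, hg, heg⟩
      rw [if_neg he, if_pos hPe]
      refine lt_of_le_of_lt (min_le_right _ _) ?_
      have h1 : sInf (P e) ≤ j := Nat.sInf_le ⟨g, hg, heg⟩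
      have h1' : ((sInf (P e) : ℕ) : ℝ) ≤ (j : ℝ) := by exact_mod_cast h1
      have h2 := (hhalf e).1
      linarith
    intro e f hef
    by_cases he : e ∈ G (v e)
    · by_cases hf : f ∈ G (v f)
      · simp only [if_pos he, if_pos hf]
        exact_mod_cast hb hef he hf
      · have := L1 f hf (v e) e he hef
        simpa only [if_pos he] using this
    · by_cases hf : f ∈ G (v f)
      · have := L2 e he (v f) f hf hef
        simpa only [if_pos hf] using this
      · simp only [if_neg he, if_neg hf]
        by_cases hPf : (P f).Nonempty
        · have hPe : (P e).Nonempty := hPf.mono (hPanti hef.le)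
          rw [if_pos hPe, if_pos hPf]
          have h1 : (B e : ℝ) < B f := by exact_mod_cast hBmono e f hef
          have hu : sInf (P e) ≤ sInf (P f) :=
            Nat.sInf_le (hPanti hef.le (Nat.sInf_mem hPf))
          have hu' : ((sInf (P e) : ℕ) : ℝ) ≤ ((sInf (P f) : ℕ) : ℝ) := by exact_mod_cast hu
          have hρef : (ρ e : ℝ) + 2 < (ρ f : ℝ) + 2 := by
            have := hρ e f hef
            have : (ρ e : ℝ) < (ρ f : ℝ) := by exact_mod_cast this
            linarith
          have hdiv : 1 / ((ρ f : ℝ) + 2) < 1 / ((ρ e : ℝ) + 2) :=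
            one_div_lt_one_div_of_lt (by positivity) hρef
          have h2 : ((sInf (P e) : ℕ) : ℝ) - 1 / ((ρ e : ℝ) + 2)
              < ((sInf (P f) : ℕ) : ℝ) - 1 / ((ρ f : ℝ) + 2) := by linarith
          exact min_lt_min h1 h2
        · rw [if_neg hPf]
          by_cases hPe : (P e).Nonempty
          · rw [if_pos hPe]
            exact lt_of_le_of_lt (min_le_left _ _) (by exact_mod_cast hBmono e f hef)
          · rw [if_neg hPe]
            exact_mod_cast hBmono e f hef
  · -- contemporaneous events get equal timestamps
    intro e f hef hfe
    dsimp only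
    by_cases h : e = f
    · subst h; rfl
    · obtain ⟨i, he, hf⟩ := hcontemp e f hef hfe h
      have hve : v e = i := hGv he
      have hvf : v f = i := hGv hf
      rw [if_pos (by rw [hve]; exact he), if_pos (by rw [hvf]; exact hf), hve, hvf]
  · -- distinguished events get integer timestamps
    intro i g hg
    dsimp only
    have hvg : v g = i := hGv hg
    rw [if_pos (by rw [hvg]; exact hg), hvg]
  · -- finiteness
    intro r
    obtain ⟨N, hN⟩ := exists_nat_ge r
    apply Set.Finite.subset (s := (⋃ i ∈ Set.Iio (N + 1), G i) ∪
      (enc ⁻¹' Set.Iio (N + 1)) ∪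
      (⋃ i ∈ Set.Iio (N + 1), ⋃ g ∈ G i, {f : E | f < g}))
    · apply Set.Finite.union
      apply Set.Finite.union
      · exact Set.Finite.biUnion (Set.finite_Iio _) fun i _ => hGfin i
      · exact Set.Finite.preimage (Set.injOn_of_injective henc) (Set.finite_Iio _)
      · exact Set.Finite.biUnion (Set.finite_Iio _) fun i _ =>
          Set.Finite.biUnion (hGfin i) fun g _ => hc g
    · intro e het
      simp only [Set.mem_setOf_eq] at het
      by_cases he : e ∈ G (v e)
      · rw [if_pos he] at het
        have : v e < N + 1 := by
          have : (v e : ℝ) < N + 1 := by linarith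
          exact_mod_cast this
        exact Or.inl (Or.inl (Set.mem_biUnion this he))
      · have hB : (B e : ℝ) < r → e ∈ enc ⁻¹' Set.Iio (N + 1) := by
          intro hBr
          have h1 : (enc e : ℝ) ≤ (B e : ℝ) := by exact_mod_cast hBenc e
          have : (enc e : ℝ) < N + 1 := by linarith
          have : enc e < N + 1 := by exact_mod_cast this
          exact this
        rw [if_neg he] at het
        by_cases hPe : (P e).Nonempty
        · rw [if_pos hPe] at het
          rcases (min_lt_iff.mp het) with hBr | hcr
          · exact Or.inl (Or.inr (hB hBr))
          · -- sInf (P e) is small, so e lies below a distinguished event of small index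
            have h2 := (hhalf e).2
            have hlt : ((sInf (P e) : ℕ) : ℝ) < N + 1 := by linarith
            have hlt' : sInf (P e) < N + 1 := by exact_mod_cast hlt
            obtain ⟨g, hg, heg⟩ := Nat.sInf_mem hPe
            refine Or.inr (Set.mem_biUnion hlt' ?_)
            exact Set.mem_biUnion hg heg
        · rw [if_neg hPe] at het
          exact Or.inl (Or.inr (hB het))
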